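/- Let f(x) = Σ_{h ∈ H_1} w^{(1)}_h Π_{v∈h} x_v be a multilinear polynomial of total power q_1 over variables indexed by {1,...,n} with nonnegative weights, and let g(x) = Σ_{h ∈ H_2} w^{(2)}_h Π_{v∈h} x_v be a multilinear polynomial of total power q_2 over variables indexed by {n+1,...,m} with nonnegative weights. Let X_1, ..., X_m be independent random variables taking values in {0,1}. Then the product polynomial fg, defined by (fg)(x_1,...,x_m) = f(x_1,...,x_n)·g(x_{n+1},...,x_m) (whose monomials are indexed by disjoint unions h_1 ∪ h_2 with h_1 ∈ H_1, h_2 ∈ H_2 and weight w^{(1)}_{h_1}·w^{(2)}_{h_2}), satisfies for every integer i ≥ 0: μ_i(fg, X) = max over integers i_1 with 0 ≤ i_1 ≤ q_1 and 0 ≤ i − i_1 ≤ q_2 of μ_{i_1}(f, X_1,...,X_n) · μ_{i−i_1}(g, X_{n+1},...,X_m). -/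

import Mathlib

open MeasureTheory ProbabilityTheory Finset

/-- The smoothness parameter `μ_r` of a multilinear polynomial `Σ_{h ∈ H} w_h Π_{v ∈ h} x_v`
with respect to random variables `Y`: the maximum, over subsets `h₀` of the vertex set of
cardinality `r`, of `Σ_{h ∈ H, h ⊇ h₀} w_h Π_{v ∈ h \ h₀} E[|Y_v|]`. -/
noncomputable def muMulti {Ω : Type*} [MeasurableSpace Ω] (P : Measure Ω) {m : ℕ}
    (H : Finset (Finset (Fin m))) (w : Finset (Fin m) → ℝ) (Y : Fin m → Ω → ℝ) (r : ℕ) : ℝ :=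
  sSup {x : ℝ | ∃ h₀ : Finset (Fin m), h₀.card = r ∧
    x = ∑ h ∈ H.filter (fun h => h₀ ⊆ h), w h * ∏ v ∈ h \ h₀, ∫ ω, |Y v ω| ∂P}

/-- Auxiliary: the value of the inner sum in `muMulti` for a fixed `h₀`. -/
noncomputable def Smu {Ω : Type*} [MeasurableSpace Ω] (P : Measure Ω) {m : ℕ}
    (H : Finset (Finset (Fin m))) (w : Finset (Fin m) → ℝ) (Y : Fin m → Ω → ℝ)
    (h₀ : Finset (Fin m)) : ℝ :=
  ∑ h ∈ H.filter (fun h => h₀ ⊆ h), w h * ∏ v ∈ h \ h₀, ∫ ω, |Y v ω| ∂P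

section Aux

variable {Ω : Type*} [MeasurableSpace Ω] (P : Measure Ω) {m : ℕ}
    (H : Finset (Finset (Fin m))) (w : Finset (Fin m) → ℝ) (Y : Fin m → Ω → ℝ)

lemma muMulti_eq_sSup_image (r : ℕ) :
    muMulti P H w Y r =
      sSup ↑(((Finset.univ : Finset (Fin m)).powersetCard r).image (Smu P H w Y)) := by
  unfold muMulti Smu
  congr 1
  ext x
  simp only [Finset.coe_image, Set.mem_image, Finset.mem_coe, Finset.mem_powersetCard,
    Set.mem_setOf_eq]
  constructor
  · rintro ⟨h₀, hc, rfl⟩; exact ⟨h₀, ⟨Finset.subset_univ _, hc⟩, rfl⟩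
  · rintro ⟨h₀, ⟨-, hc⟩, rfl⟩; exact ⟨h₀, hc, rfl⟩

variable {H w}

lemma Smu_nonneg (hw : ∀ h ∈ H, 0 ≤ w h) (h₀ : Finset (Fin m)) : 0 ≤ Smu P H w Y h₀ := by
  refine Finset.sum_nonneg fun h hh => mul_nonneg (hw h (Finset.mem_filter.1 hh).1)
    (Finset.prod_nonneg fun v _ => integral_nonneg fun ω => abs_nonneg _)

lemma Smu_le_muMulti (h₀ : Finset (Fin m)) :
    Smu P H w Y h₀ ≤ muMulti P H w Y h₀.card := by
  rw [muMulti_eq_sSup_image]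
  refine le_csSup (Finset.bddAbove _) ?_
  simp only [Finset.coe_image, Set.mem_image, Finset.mem_coe, Finset.mem_powersetCard]
  exact ⟨h₀, ⟨Finset.subset_univ _, rfl⟩, rfl⟩

lemma muMulti_nonneg (hw : ∀ h ∈ H, 0 ≤ w h) (r : ℕ) : 0 ≤ muMulti P H w Y r := by
  rw [muMulti_eq_sSup_image]
  rcases Finset.eq_empty_or_nonempty (((Finset.univ : Finset (Fin m)).powersetCard r).image
      (Smu P H w Y)) with he | hne
  · rw [he]; simp [Real.sSup_empty]
  · obtain ⟨x, hx⟩ := hne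
    obtain ⟨h₀, -, rfl⟩ := Finset.mem_image.1 hx
    exact le_trans (Smu_nonneg P Y hw h₀) (le_csSup (Finset.bddAbove _) hx)

lemma exists_of_muMulti_pos {r : ℕ} (hpos : 0 < muMulti P H w Y r) :
    ∃ h₀ : Finset (Fin m), h₀.card = r ∧ Smu P H w Y h₀ = muMulti P H w Y r := by
  rw [muMulti_eq_sSup_image] at hpos ⊢
  set s := (((Finset.univ : Finset (Fin m)).powersetCard r).image (Smu P H w Y)) with hs
  rcases Finset.eq_empty_or_nonempty s with he | hne
  · rw [he] at hpos; simp [Real.sSup_empty] at hpos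
  · have hmem : sSup (↑s : Set ℝ) ∈ s := hne.csSup_mem
    obtain ⟨h₀, hh₀, heq⟩ := Finset.mem_image.1 hmem
    exact ⟨h₀, (Finset.mem_powersetCard.1 hh₀).2, heq⟩

lemma Smu_pos_subset {h₀ : Finset (Fin m)} (h : 0 < Smu P H w Y h₀) :
    ∃ g ∈ H, h₀ ⊆ g := by
  by_contra hc
  push_neg at hc
  have : H.filter (fun h => h₀ ⊆ h) = ∅ :=
    Finset.filter_eq_empty_iff.2 fun g hg => hc g hg
  rw [Smu, this] at h
  simp at h

end Aux

section Key

variable {m n : ℕ}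

lemma filter_union_split {A B : Finset (Fin m)}
    (hA : ∀ v ∈ A, (v : ℕ) < n) (hB : ∀ v ∈ B, n ≤ (v : ℕ)) :
    (A ∪ B).filter (fun v : Fin m => (v : ℕ) < n) = A ∧
    (A ∪ B).filter (fun v : Fin m => n ≤ (v : ℕ)) = B := by
  constructor
  · rw [Finset.filter_union, Finset.filter_true_of_mem hA,
      Finset.filter_false_of_mem (fun v hv => not_lt.2 (hB v hv)), Finset.union_empty]
  · rw [Finset.filter_union, Finset.filter_true_of_mem hB,
      Finset.filter_false_of_mem (fun v hv => not_le.2 (hA v hv)), Finset.empty_union]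

lemma Smu_prod {Ω : Type*} [MeasurableSpace Ω] (P : Measure Ω)
    (H₁ H₂ : Finset (Finset (Fin m))) (w₁ w₂ : Finset (Fin m) → ℝ)
    (hV₁ : ∀ h ∈ H₁, ∀ v ∈ h, (v : ℕ) < n)
    (hV₂ : ∀ h ∈ H₂, ∀ v ∈ h, n ≤ (v : ℕ))
    (X : Fin m → Ω → ℝ) (h₀ : Finset (Fin m)) :
    Smu P ((H₁ ×ˢ H₂).image fun p => p.1 ∪ p.2)
      (fun h => w₁ (h.filter fun v => (v : ℕ) < n) * w₂ (h.filter fun v => n ≤ (v : ℕ)))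
      X h₀ =
    Smu P H₁ w₁ X (h₀.filter fun v => (v : ℕ) < n) *
      Smu P H₂ w₂ X (h₀.filter fun v => n ≤ (v : ℕ)) := by
  classical
  set A := h₀.filter (fun v : Fin m => (v : ℕ) < n) with hA
  set B := h₀.filter (fun v : Fin m => n ≤ (v : ℕ)) with hB
  have hAB : A ∪ B = h₀ := by
    ext v
    simp only [hA, hB, Finset.mem_union, Finset.mem_filter]
    rcases lt_or_ge (v : ℕ) n with h | h <;> tauto
  have hAmem : ∀ v ∈ A, (v : ℕ) < n := fun v hv => (Finset.mem_filter.1 hv).2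
  have hBmem : ∀ v ∈ B, n ≤ (v : ℕ) := fun v hv => (Finset.mem_filter.1 hv).2
  unfold Smu
  rw [Finset.sum_filter, Finset.sum_image ?inj]
  case inj =>
    rintro ⟨a₁, a₂⟩ ha ⟨b₁, b₂⟩ hb hab
    simp only [Finset.mem_coe, Finset.mem_product] at ha hb
    obtain ⟨ha1, ha2⟩ := filter_union_split (hV₁ a₁ ha.1) (hV₂ a₂ ha.2)
    obtain ⟨hb1, hb2⟩ := filter_union_split (hV₁ b₁ hb.1) (hV₂ b₂ hb.2)
    simp only at hab
    have e1 : a₁ = b₁ := by rw [← ha1, ← hb1, hab]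
    have e2 : a₂ = b₂ := by rw [← ha2, ← hb2, hab]
    simp [e1, e2]
  rw [Finset.sum_product]
  trans ∑ h₁ ∈ H₁, ∑ h₂ ∈ H₂,
      (if A ⊆ h₁ then w₁ h₁ * ∏ v ∈ h₁ \ A, ∫ ω, |X v ω| ∂P else 0) *
      (if B ⊆ h₂ then w₂ h₂ * ∏ v ∈ h₂ \ B, ∫ ω, |X v ω| ∂P else 0)
  swap
  · rw [← Finset.sum_mul_sum, ← Finset.sum_filter, ← Finset.sum_filter]
  refine Finset.sum_congr rfl fun h₁ hh₁ => Finset.sum_congr rfl fun h₂ hh₂ => ?_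
  have hV₁' := hV₁ h₁ hh₁
  have hV₂' := hV₂ h₂ hh₂
  have hiff : h₀ ⊆ h₁ ∪ h₂ ↔ A ⊆ h₁ ∧ B ⊆ h₂ := by
    constructor
    · intro hs
      constructor
      · intro v hv
        have hv' := hs (hAB ▸ Finset.mem_union_left _ hv)
        rcases Finset.mem_union.1 hv' with h | h
        · exact h
        · exact absurd (hV₂' v h) (not_le.2 (hAmem v hv))
      · intro v hv
        have hv' := hs (hAB ▸ Finset.mem_union_right _ hv)
        rcases Finset.mem_union.1 hv' with h | h
        · exact absurd (hV₁' v h) (not_lt.2 (hBmem v hv))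
        · exact h
    · rintro ⟨h1, h2⟩ v hv
      rw [← hAB] at hv
      rcases Finset.mem_union.1 hv with h | h
      · exact Finset.mem_union_left _ (h1 h)
      · exact Finset.mem_union_right _ (h2 h)
  rw [if_congr hiff rfl rfl]
  by_cases hc1 : A ⊆ h₁
  swap
  · rw [if_neg (fun h => hc1 h.1), if_neg hc1, zero_mul]
  by_cases hc2 : B ⊆ h₂
  swap
  · rw [if_neg (fun h => hc2 h.2), if_neg hc2, mul_zero]
  rw [if_pos ⟨hc1, hc2⟩, if_pos hc1, if_pos hc2]
  obtain ⟨hf1, hf2⟩ := filter_union_split (n := n) hV₁' hV₂'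
  have k1 : ∀ v ∈ h₁, v ∉ B := fun v hv hvB => absurd (hBmem v hvB) (not_le.2 (hV₁' v hv))
  have k2 : ∀ v ∈ h₂, v ∉ A := fun v hv hvA => absurd (hAmem v hvA) (not_lt.2 (hV₂' v hv))
  have hset : (h₁ ∪ h₂) \ h₀ = (h₁ \ A) ∪ (h₂ \ B) := by
    ext v
    simp only [← hAB, Finset.mem_sdiff, Finset.mem_union, not_or]
    constructor
    · rintro ⟨hv | hv, hnA, hnB⟩
      · exact Or.inl ⟨hv, hnA⟩
      · exact Or.inr ⟨hv, hnB⟩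
    · rintro (⟨hv, hnA⟩ | ⟨hv, hnB⟩)
      · exact ⟨Or.inl hv, hnA, k1 v hv⟩
      · exact ⟨Or.inr hv, k2 v hv, hnB⟩
  have hdisj : Disjoint (h₁ \ A) (h₂ \ B) := by
    refine Finset.disjoint_left.2 fun v hv hv' => ?_
    exact absurd (hV₂' v (Finset.mem_sdiff.1 hv').1) (not_le.2 (hV₁' v (Finset.mem_sdiff.1 hv).1))
  rw [hset, Finset.prod_union hdisj]
  simp only [hf1, hf2]
  ring

end Key

/-- `μ_i` of a product of two multilinear polynomials over disjoint sets of variables: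
`f` uses the variables `{0,…,n-1}` and `g` the variables `{n,…,m-1}`.  The product
polynomial has hyperedges `h₁ ∪ h₂` (for `h₁ ∈ H₁`, `h₂ ∈ H₂`) with weight
`w₁(h₁)·w₂(h₂)`. -/
theorem mu_of_product (Ω : Type) [MeasurableSpace Ω] (P : Measure Ω) [IsProbabilityMeasure P]
    (n m : ℕ) (hnm : n ≤ m) (q₁ q₂ : ℕ)
    (H₁ H₂ : Finset (Finset (Fin m))) (w₁ w₂ : Finset (Fin m) → ℝ)
    (hV₁ : ∀ h ∈ H₁, ∀ v ∈ h, (v : ℕ) < n)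
    (hV₂ : ∀ h ∈ H₂, ∀ v ∈ h, n ≤ (v : ℕ))
    (hq₁ : ∀ h ∈ H₁, h.card ≤ q₁) (hq₂ : ∀ h ∈ H₂, h.card ≤ q₂)
    (hw₁ : ∀ h ∈ H₁, 0 ≤ w₁ h) (hw₂ : ∀ h ∈ H₂, 0 ≤ w₂ h)
    (X : Fin m → Ω → ℝ)
    (hmeas : ∀ v, Measurable (X v))
    (hindep : iIndepFun X P)
    (h01 : ∀ v ω, X v ω = 0 ∨ X v ω = 1) :
    ∀ i : ℕ,
      muMulti P ((H₁ ×ˢ H₂).image fun p => p.1 ∪ p.2)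
        (fun h => w₁ (h.filter fun v => (v : ℕ) < n) * w₂ (h.filter fun v => n ≤ (v : ℕ)))
        X i =
      sSup {x : ℝ | ∃ i₁ : ℕ, i₁ ≤ q₁ ∧ i₁ ≤ i ∧ i - i₁ ≤ q₂ ∧
        x = muMulti P H₁ w₁ X i₁ * muMulti P H₂ w₂ X (i - i₁)} := by
  classical
  intro i
  set HH := (H₁ ×ˢ H₂).image fun p : Finset (Fin m) × Finset (Fin m) => p.1 ∪ p.2 with hHH
  set W : Finset (Fin m) → ℝ :=
    fun h => w₁ (h.filter fun v => (v : ℕ) < n) * w₂ (h.filter fun v => n ≤ (v : ℕ)) with hW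
  set Rset : Set ℝ := {x : ℝ | ∃ i₁ : ℕ, i₁ ≤ q₁ ∧ i₁ ≤ i ∧ i - i₁ ≤ q₂ ∧
    x = muMulti P H₁ w₁ X i₁ * muMulti P H₂ w₂ X (i - i₁)} with hRset
  have hwW : ∀ h ∈ HH, 0 ≤ W h := by
    intro h hh
    obtain ⟨p, hp, rfl⟩ := Finset.mem_image.1 hh
    rw [Finset.mem_product] at hp
    obtain ⟨hf1, hf2⟩ := filter_union_split (hV₁ p.1 hp.1) (hV₂ p.2 hp.2)
    simp only [hW, hf1, hf2]
    exact mul_nonneg (hw₁ p.1 hp.1) (hw₂ p.2 hp.2)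
  have hRbdd : BddAbove Rset := by
    refine BddAbove.mono ?_ (((Set.finite_Iic i).image
      (fun i₁ => muMulti P H₁ w₁ X i₁ * muMulti P H₂ w₂ X (i - i₁))).bddAbove)
    rintro x ⟨i₁, -, h2, -, rfl⟩
    exact ⟨i₁, h2, rfl⟩
  have hLHS : muMulti P HH W X i =
      sSup {x : ℝ | ∃ h₀ : Finset (Fin m), h₀.card = i ∧ x = Smu P HH W X h₀} := rfl
  apply le_antisymm
  · -- LHS ≤ RHS
    by_cases hi : i ≤ q₁ + q₂
    · have hval : min i q₁ ≤ q₁ ∧ min i q₁ ≤ i ∧ i - min i q₁ ≤ q₂ := by omega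
      have hmem : muMulti P H₁ w₁ X (min i q₁) * muMulti P H₂ w₂ X (i - min i q₁) ∈ Rset :=
        ⟨min i q₁, hval.1, hval.2.1, hval.2.2, rfl⟩
      have hR0 : 0 ≤ sSup Rset :=
        le_trans (mul_nonneg (muMulti_nonneg P X hw₁ _) (muMulti_nonneg P X hw₂ _))
          (le_csSup hRbdd hmem)
      rw [hLHS]
      refine Real.sSup_le ?_ hR0
      rintro x ⟨h₀, hc, rfl⟩
      rw [Smu_prod P H₁ H₂ w₁ w₂ hV₁ hV₂ X h₀]
      set A := h₀.filter (fun v : Fin m => (v : ℕ) < n) with hA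
      set B := h₀.filter (fun v : Fin m => n ≤ (v : ℕ)) with hB
      have hA0 : 0 ≤ Smu P H₁ w₁ X A := Smu_nonneg P X hw₁ A
      have hB0 : 0 ≤ Smu P H₂ w₂ X B := Smu_nonneg P X hw₂ B
      by_cases hpos : 0 < Smu P H₁ w₁ X A * Smu P H₂ w₂ X B
      swap
      · exact le_trans (not_lt.1 hpos) hR0
      have hApos : 0 < Smu P H₁ w₁ X A ∧ 0 < Smu P H₂ w₂ X B := by
        rcases mul_pos_iff.1 hpos with h | h
        · exact h
        · exact absurd h.1 (not_lt.2 hA0)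
      obtain ⟨g₁, hg₁, hsub₁⟩ := Smu_pos_subset P X hApos.1
      obtain ⟨g₂, hg₂, hsub₂⟩ := Smu_pos_subset P X hApos.2
      have hcard₁ : A.card ≤ q₁ := le_trans (Finset.card_le_card hsub₁) (hq₁ g₁ hg₁)
      have hcard₂ : B.card ≤ q₂ := le_trans (Finset.card_le_card hsub₂) (hq₂ g₂ hg₂)
      have hBcompl : B = h₀.filter (fun v : Fin m => ¬ ((v : ℕ) < n)) := by
        rw [hB]; exact Finset.filter_congr fun v _ => by simp [not_lt]
      have hsum : A.card + B.card = i := by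
        rw [hA, hBcompl, Finset.card_filter_add_card_filter_not, hc]
      have hBcard : B.card = i - A.card := by omega
      have hmem' : muMulti P H₁ w₁ X A.card * muMulti P H₂ w₂ X (i - A.card) ∈ Rset :=
        ⟨A.card, hcard₁, by omega, by omega, rfl⟩
      refine le_trans ?_ (le_csSup hRbdd hmem')
      refine mul_le_mul (Smu_le_muMulti P X A) ?_ hB0 (muMulti_nonneg P X hw₁ _)
      rw [← hBcard]
      exact Smu_le_muMulti P X B
    · -- i > q₁ + q₂ : both sides are 0
      have hRempty : Rset = ∅ := by
        rw [hRset]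
        ext x
        simp only [Set.mem_setOf_eq, Set.mem_empty_iff_false, iff_false, not_exists]
        rintro i₁ ⟨h1, h2, h3, -⟩
        omega
      rw [hRempty, Real.sSup_empty, hLHS]
      refine Real.sSup_le ?_ le_rfl
      rintro x ⟨h₀, hc, rfl⟩
      have : HH.filter (fun h => h₀ ⊆ h) = ∅ := by
        refine Finset.filter_eq_empty_iff.2 fun h hh hsub => ?_
        obtain ⟨p, hp, rfl⟩ := Finset.mem_image.1 hh
        rw [Finset.mem_product] at hp
        have hle := Finset.card_le_card hsub
        have : (p.1 ∪ p.2).card ≤ q₁ + q₂ :=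
          le_trans (Finset.card_union_le _ _) (add_le_add (hq₁ p.1 hp.1) (hq₂ p.2 hp.2))
        omega
      rw [Smu, this]
      simp
  · -- RHS ≤ LHS
    refine Real.sSup_le ?_ (muMulti_nonneg P X hwW i)
    rintro x ⟨i₁, hc1, hc2, hc3, rfl⟩
    have hμ1 : 0 ≤ muMulti P H₁ w₁ X i₁ := muMulti_nonneg P X hw₁ _
    have hμ2 : 0 ≤ muMulti P H₂ w₂ X (i - i₁) := muMulti_nonneg P X hw₂ _
    by_cases hpos : 0 < muMulti P H₁ w₁ X i₁ * muMulti P H₂ w₂ X (i - i₁)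
    swap
    · exact le_trans (not_lt.1 hpos) (muMulti_nonneg P X hwW i)
    have hboth : 0 < muMulti P H₁ w₁ X i₁ ∧ 0 < muMulti P H₂ w₂ X (i - i₁) := by
      rcases mul_pos_iff.1 hpos with h | h
      · exact h
      · exact absurd h.1 (not_lt.2 hμ1)
    obtain ⟨h₀₁, hc₁, heq₁⟩ := exists_of_muMulti_pos P X hboth.1
    obtain ⟨h₀₂, hc₂, heq₂⟩ := exists_of_muMulti_pos P X hboth.2
    have hp₁ : 0 < Smu P H₁ w₁ X h₀₁ := heq₁ ▸ hboth.1
    have hp₂ : 0 < Smu P H₂ w₂ X h₀₂ := heq₂ ▸ hboth.2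
    obtain ⟨g₁, hg₁, hsub₁⟩ := Smu_pos_subset P X hp₁
    obtain ⟨g₂, hg₂, hsub₂⟩ := Smu_pos_subset P X hp₂
    have hm₁ : ∀ v ∈ h₀₁, (v : ℕ) < n := fun v hv => hV₁ g₁ hg₁ v (hsub₁ hv)
    have hm₂ : ∀ v ∈ h₀₂, n ≤ (v : ℕ) := fun v hv => hV₂ g₂ hg₂ v (hsub₂ hv)
    obtain ⟨hf1, hf2⟩ := filter_union_split (n := n) hm₁ hm₂
    have hdisj : Disjoint h₀₁ h₀₂ := by
      refine Finset.disjoint_left.2 fun v hv hv' => ?_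
      exact absurd (hm₂ v hv') (not_le.2 (hm₁ v hv))
    have hcard : (h₀₁ ∪ h₀₂).card = i := by
      rw [Finset.card_union_of_disjoint hdisj, hc₁, hc₂]
      omega
    have hkey := Smu_prod P H₁ H₂ w₁ w₂ hV₁ hV₂ X (h₀₁ ∪ h₀₂)
    rw [hf1, hf2, heq₁, heq₂] at hkey
    calc muMulti P H₁ w₁ X i₁ * muMulti P H₂ w₂ X (i - i₁)
        = Smu P HH W X (h₀₁ ∪ h₀₂) := hkey.symm
      _ ≤ muMulti P HH W X (h₀₁ ∪ h₀₂).card := Smu_le_muMulti P X _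
      _ = muMulti P HH W X i := by rw [hcard]
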